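/- arXiv:0707.2350 — 3 statements merged into one kernel-verified Lean document; each statement's English description precedes it below -/
import Mathlib

section
/- Let E be a finite linearly ordered set, let g : E → E be a bijection, let γ be a subset of E and let e ∈ γ. Then sgn(g:γ) · sgn(g:γ∖{e}) = (−1)^{pos(e:γ)} · (−1)^{pos(g(e):g(γ))}. -/
/-- `pos(e:γ)`: the number of elements `j ∈ γ` with `j ≤ e`. -/
def finsetPos {E : Type*} [LinearOrder E] (γ : Finset E) (e : E) : ℕ :=
  (γ.filter (fun j => j ≤ e)).card

/-- `sgn(g:γ)`: the signature of the bijection `γ → g(γ), e ↦ g e`, where both sides are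
identified with `Fin γ.card` via the unique order-preserving bijections. -/
noncomputable def finsetSign {E : Type*} [LinearOrder E] (g : E ≃ E) (γ : Finset E) : ℤ :=
  (Equiv.Perm.sign
    (((γ.orderIsoOfFin rfl).toEquiv.trans
      (g.subtypeEquiv (fun a =>
        ⟨fun ha => Finset.mem_image_of_mem g ha,
         fun hb => by
          obtain ⟨c, hc, hce⟩ := Finset.mem_image.mp hb
          rw [← g.injective hce]; exact hc⟩))).trans
      ((γ.image g).orderIsoOfFin
        (Finset.card_image_of_injective γ g.injective)).toEquiv.symm) : ℤ)



open Equiv Finset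

/-- Fin-level key lemma. -/
lemma lemA {n : ℕ} (σ : Equiv.Perm (Fin (n+1))) (σ' : Equiv.Perm (Fin n)) (i j : Fin (n+1))
    (h1 : σ i = j) (h2 : ∀ k, σ (i.succAbove k) = j.succAbove (σ' k)) :
    (Equiv.Perm.sign σ : ℤ) * Equiv.Perm.sign σ' = (-1) ^ ((i : ℕ) + (j : ℕ)) := by
  have hρ : (Fin.cycleRange j) * σ * (Fin.cycleRange i)⁻¹ =
      Equiv.Perm.decomposeFin.symm (0, σ') := by
    ext k
    induction k using Fin.cases with
    | zero =>
        have hi : (Fin.cycleRange i)⁻¹ 0 = i := by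
          rw [Equiv.Perm.inv_eq_iff_eq, Fin.cycleRange_self]
        simp [Equiv.Perm.mul_apply, hi, h1]
    | succ k =>
        have hi : (Fin.cycleRange i)⁻¹ k.succ = i.succAbove k := by
          rw [Equiv.Perm.inv_eq_iff_eq, Fin.cycleRange_succAbove]
        simp [Equiv.Perm.mul_apply, hi, h2 k]
  have hs := congrArg Equiv.Perm.sign hρ
  simp only [Equiv.Perm.sign_mul, Equiv.Perm.sign_inv, Fin.sign_cycleRange,
    Equiv.Perm.decomposeFin.symm_sign, if_pos rfl, one_mul] at hs
  have hs' : ((-1 : ℤˣ)) ^ ((i:ℕ)+(j:ℕ)) * Equiv.Perm.sign σ = Equiv.Perm.sign σ' := by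
    simp only [if_true] at hs
    rw [one_mul] at hs
    rw [pow_add, ← hs, mul_comm ((-1:ℤˣ)^(i:ℕ)) ((-1:ℤˣ)^(j:ℕ)), mul_assoc,
      mul_comm ((-1:ℤˣ)^(i:ℕ)) (Equiv.Perm.sign σ), ← mul_assoc]
  have := congrArg (fun u : ℤˣ => (u : ℤ)) hs'
  push_cast at this
  rw [← this]
  have h2 : ((Equiv.Perm.sign σ : ℤˣ) : ℤ) * ((Equiv.Perm.sign σ : ℤˣ) : ℤ) = 1 := by
    rcases Int.units_eq_one_or (Equiv.Perm.sign σ) with h | h <;> simp [h]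
  ring_nf
  ring_nf at h2
  rw [h2, one_mul]

lemma posAux {E : Type*} [LinearOrder E] (s : Finset E) {m : ℕ} (h : s.card = m) (x : E)
    (hx : x ∈ s) :
    (s.filter (fun j => j ≤ x)).card = ((s.orderIsoOfFin h).symm ⟨x, hx⟩ : ℕ) + 1 := by
  set i := (s.orderIsoOfFin h).symm ⟨x, hx⟩ with hi
  have himg : s.filter (fun j => j ≤ x) =
      (Finset.Iic i).image (fun k => ((s.orderIsoOfFin h) k : E)) := by
    ext y
    simp only [Finset.mem_filter, Finset.mem_image, Finset.mem_Iic]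
    constructor
    · rintro ⟨hy, hyx⟩
      refine ⟨(s.orderIsoOfFin h).symm ⟨y, hy⟩, ?_, by simp⟩
      rw [hi]
      exact (s.orderIsoOfFin h).symm.monotone (Subtype.mk_le_mk.2 hyx)
    · rintro ⟨k, hk, rfl⟩
      refine ⟨((s.orderIsoOfFin h) k).2, ?_⟩
      have : (s.orderIsoOfFin h) k ≤ (s.orderIsoOfFin h) i :=
        (s.orderIsoOfFin h).monotone hk
      simpa [hi] using Subtype.coe_le_coe.2 this
  rw [himg, Finset.card_image_of_injective _ (fun a b hab =>
    (s.orderIsoOfFin h).injective (Subtype.ext hab)), Fin.card_Iic]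

lemma eraseAux {E : Type*} [LinearOrder E] (s : Finset E) {n : ℕ} (h : s.card = n + 1) (x : E)
    (hx : x ∈ s) (h' : (s.erase x).card = n) (k : Fin n) :
    ((s.orderIsoOfFin h) (((s.orderIsoOfFin h).symm ⟨x, hx⟩).succAbove k) : E) =
      (s.erase x).orderEmbOfFin h' k := by
  set i := (s.orderIsoOfFin h).symm ⟨x, hx⟩ with hi
  have key := Finset.orderEmbOfFin_unique h'
    (f := fun k : Fin n => ((s.orderIsoOfFin h) (i.succAbove k) : E))
    (fun k => by
      rw [Finset.mem_erase]
      refine ⟨?_, ((s.orderIsoOfFin h) (i.succAbove k)).2⟩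
      intro hcontra
      have : (s.orderIsoOfFin h) (i.succAbove k) = (s.orderIsoOfFin h) i := by
        rw [hi, OrderIso.apply_symm_apply]
        exact Subtype.ext hcontra
      exact Fin.succAbove_ne i k ((s.orderIsoOfFin h).injective this))
    (fun a b hab => by
      simp only [Finset.coe_orderIsoOfFin_apply] at *
      exact ((s.orderEmbOfFin h).strictMono.comp (Fin.strictMono_succAbove i)) hab)
  exact congrFun key k

lemma embCongr {E : Type*} [LinearOrder E] {s t : Finset E} (hst : s = t) {k : ℕ}
    (h : s.card = k) (x : Fin k) :
    s.orderEmbOfFin h x = t.orderEmbOfFin (hst ▸ h) x := by subst hst; rfl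

def gEquiv {E : Type*} [LinearOrder E] (g : E ≃ E) (γ : Finset E) :
    {a // a ∈ γ} ≃ {b // b ∈ γ.image g} :=
  g.subtypeEquiv (fun a =>
    ⟨fun ha => Finset.mem_image_of_mem g ha,
     fun hb => by
      obtain ⟨c, hc, hce⟩ := Finset.mem_image.mp hb
      rw [← g.injective hce]; exact hc⟩)

lemma signEq {E : Type*} [LinearOrder E] (g : E ≃ E) (γ : Finset E) {k : ℕ} (h : γ.card = k)
    (h2 : (γ.image g).card = k) :
    finsetSign g γ = (Equiv.Perm.sign
      (((γ.orderIsoOfFin h).toEquiv.trans (gEquiv g γ)).trans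
        ((γ.image g).orderIsoOfFin h2).toEquiv.symm) : ℤ) := by
  subst h; rfl

/-- **Lemma 6.4.** For a bijection `g` of a finite linearly ordered set `E`, a subset `γ ⊆ E`
and `e ∈ γ`:  `sgn(g:γ) · sgn(g:γ∖{e}) = (−1)^{pos(e:γ)} · (−1)^{pos(g e : g(γ))}`. -/
theorem stmt0 {E : Type*} [LinearOrder E] [Fintype E] (g : E ≃ E) (γ : Finset E)
    (e : E) (he : e ∈ γ) :
    finsetSign g γ * finsetSign g (γ.erase e) =
      (-1 : ℤ) ^ finsetPos γ e * (-1 : ℤ) ^ finsetPos (γ.image g) (g e) := by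
  obtain ⟨n, hn⟩ : ∃ n, γ.card = n + 1 :=
    ⟨γ.card - 1, (Nat.succ_pred_eq_of_pos (Finset.card_pos.2 ⟨e, he⟩)).symm⟩
  have hne : (γ.erase e).card = n := by rw [Finset.card_erase_of_mem he, hn]; omega
  have hge : g e ∈ γ.image g := Finset.mem_image_of_mem g he
  have hni : (γ.image g).card = n + 1 := by
    rw [Finset.card_image_of_injective γ g.injective, hn]
  have hnei : ((γ.erase e).image g).card = n := by
    rw [Finset.card_image_of_injective _ g.injective, hne]
  have hni' : ((γ.image g).erase (g e)).card = n := by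
    rw [Finset.card_erase_of_mem hge, hni]; omega
  set isoγ := γ.orderIsoOfFin hn with hisoγ
  set isoι := (γ.image g).orderIsoOfFin hni with hisoι
  set isoE := (γ.erase e).orderIsoOfFin hne with hisoE
  set isoI := ((γ.erase e).image g).orderIsoOfFin hnei with hisoI
  set σ := (isoγ.toEquiv.trans (gEquiv g γ)).trans isoι.toEquiv.symm with hσ
  set σ' := (isoE.toEquiv.trans (gEquiv g (γ.erase e))).trans isoI.toEquiv.symm with hσ'
  set i := isoγ.symm ⟨e, he⟩ with hidef
  set j := isoι.symm ⟨g e, hge⟩ with hjdef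
  have h1 : σ i = j := by
    show isoι.toEquiv.symm ((gEquiv g γ) (isoγ.toEquiv (isoγ.symm ⟨e, he⟩))) = j
    have : isoγ.toEquiv (isoγ.symm ⟨e, he⟩) = ⟨e, he⟩ := isoγ.apply_symm_apply _
    rw [this]
    rfl
  have h2 : ∀ k, σ (i.succAbove k) = j.succAbove (σ' k) := by
    intro k
    show isoι.toEquiv.symm ((gEquiv g γ) (isoγ.toEquiv (i.succAbove k))) = j.succAbove (σ' k)
    rw [Equiv.symm_apply_eq]
    apply Subtype.ext
    show g ((isoγ (i.succAbove k) : E)) = ((isoι (j.succAbove (σ' k)) : E))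
    have eL : ((isoγ (i.succAbove k) : E)) = (γ.erase e).orderEmbOfFin hne k :=
      eraseAux γ hn e he hne k
    have eR : ((isoι (j.succAbove (σ' k)) : E)) =
        ((γ.image g).erase (g e)).orderEmbOfFin hni' (σ' k) :=
      eraseAux (γ.image g) hni (g e) hge hni' (σ' k)
    have hfe : (γ.image g).erase (g e) = (γ.erase e).image g :=
      (Finset.image_erase g.injective γ e).symm
    have e3 : ((γ.image g).erase (g e)).orderEmbOfFin hni' (σ' k) =
        ((γ.erase e).image g).orderEmbOfFin (hfe ▸ hni') (σ' k) := embCongr hfe hni' _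
    have e4 : ((γ.erase e).image g).orderEmbOfFin (hfe ▸ hni') (σ' k) =
        ((isoI (σ' k) : E)) := by
      rw [← Finset.coe_orderIsoOfFin_apply]
    have e5 : ((isoI (σ' k) : E)) = g ((isoE k : E)) := by
      show ((isoI (isoI.toEquiv.symm ((gEquiv g (γ.erase e)) (isoE.toEquiv k))) : E)) = _
      rw [show isoI (isoI.toEquiv.symm ((gEquiv g (γ.erase e)) (isoE.toEquiv k)))
            = (gEquiv g (γ.erase e)) (isoE.toEquiv k) from
          isoI.apply_symm_apply _]
      rfl
    rw [eR, e3, e4, e5, eL]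
    rfl
  have key := lemA σ σ' i j h1 h2
  have hsγ : finsetSign g γ = (Equiv.Perm.sign σ : ℤ) := signEq g γ hn hni
  have hsE : finsetSign g (γ.erase e) = (Equiv.Perm.sign σ' : ℤ) := signEq g (γ.erase e) hne hnei
  have hp1 : finsetPos γ e = (i : ℕ) + 1 := posAux γ hn e he
  have hp2 : finsetPos (γ.image g) (g e) = (j : ℕ) + 1 := posAux (γ.image g) hni (g e) hge
  rw [hsγ, hsE, key, hp1, hp2, ← pow_add,
    show (i : ℕ) + 1 + ((j : ℕ) + 1) = ((i : ℕ) + (j : ℕ)) + 2 by ring]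
  rw [pow_add (-1 : ℤ) ((i : ℕ) + (j : ℕ)) 2]
  norm_num
end

section
/- Let E be a finite linearly ordered set, let g : E → E be a bijection, and let k be a commutative ring. Suppose given for each subset γ ⊆ E a k-module N(γ), for each e ∈ γ a k-linear map ∂_{γ,e} : N(γ) → N(γ∖{e}) making the cubical diagram commute, and additive maps σ_γ : N(γ) → N(g(γ)) satisfying the naturality condition σ_{γ∖{e}} ∘ ∂_{γ,e} = ∂_{g(γ),g(e)} ∘ σ_γ for all e ∈ γ. Then for every γ ⊆ E and every x ∈ N(γ): Σ_{e∈γ} (−1)^{pos(e:γ)} · sgn(g:γ∖{e}) · σ_{γ∖{e}}(∂_{γ,e}(x)) = sgn(g:γ) · Σ_{e∈γ} (−1)^{pos(g(e):g(γ))} · ∂_{g(γ),g(e)}(σ_γ(x)), as elements of ⊕_{δ⊆E,|δ|=|γ|−1} N(δ). Equivalently, the signed action g·(y_γ·x) := sgn(g:γ)·y_{g(γ)}·σ_γ(x) commutes with the cubical part of the total-cofibre differential D(y_γ·x) = Σ_{e∈γ} (−1)^{pos(e:γ)} y_{γ∖{e}}·∂_{γ,e}(x). -/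
open DirectSum

section Aux

variable {E : Type*} [LinearOrder E]

theorem gperm_mem_image_iff (g : E ≃ E) (γ : Finset E) (a : E) :
    a ∈ γ ↔ g a ∈ γ.image g :=
  ⟨fun ha => Finset.mem_image_of_mem g ha, fun hb => by
    obtain ⟨c, hc, hce⟩ := Finset.mem_image.mp hb
    rw [← g.injective hce]; exact hc⟩

/-- The permutation of `Fin n` induced by `g` on a finset `γ` of cardinality `n`. -/
noncomputable def gperm (g : E ≃ E) (γ : Finset E) {n : ℕ} (hn : γ.card = n) :
    Equiv.Perm (Fin n) :=
  ((γ.orderIsoOfFin hn).toEquiv.trans (g.subtypeEquiv (gperm_mem_image_iff g γ))).trans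
    ((γ.image g).orderIsoOfFin
      ((Finset.card_image_of_injective γ g.injective).trans hn)).toEquiv.symm

theorem gperm_apply (g : E ≃ E) (γ : Finset E) {n : ℕ} (hn : γ.card = n)
    (hm : (γ.image g).card = n) (x : Fin n) :
    (γ.image g).orderEmbOfFin hm (gperm g γ hn x) = g (γ.orderEmbOfFin hn x) := by
  have h1 : ((γ.image g).orderIsoOfFin hm) (gperm g γ hn x)
      = g.subtypeEquiv (gperm_mem_image_iff g γ) ((γ.orderIsoOfFin hn) x) := by
    simp only [gperm, Equiv.trans_apply]
    exact Equiv.apply_symm_apply ((γ.image g).orderIsoOfFin hm).toEquiv _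
  calc (γ.image g).orderEmbOfFin hm (gperm g γ hn x)
      = (((γ.image g).orderIsoOfFin hm) (gperm g γ hn x) : E) := rfl
    _ = _ := by rw [h1]; rfl

theorem finsetSign_eq (g : E ≃ E) (γ : Finset E) {n : ℕ} (hn : γ.card = n) :
    finsetSign g γ = (Equiv.Perm.sign (gperm g γ hn) : ℤ) := by
  subst hn; rfl

theorem finsetPos_eq (γ : Finset E) {n : ℕ} (hn : γ.card = n) (i : Fin n) :
    finsetPos γ (γ.orderEmbOfFin hn i) = i + 1 := by
  classical
  have himg : γ.filter (fun j => j ≤ γ.orderEmbOfFin hn i)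
      = (Finset.Iic i).image (γ.orderEmbOfFin hn) := by
    ext b
    simp only [Finset.mem_filter, Finset.mem_image, Finset.mem_Iic]
    constructor
    · rintro ⟨hb, hble⟩
      have hrange : b ∈ Set.range (γ.orderEmbOfFin hn) := by
        rw [Finset.range_orderEmbOfFin]; exact Finset.mem_coe.mpr hb
      obtain ⟨x, hx⟩ := hrange
      exact ⟨x, (γ.orderEmbOfFin hn).le_iff_le.mp (by rw [hx]; exact hble), hx⟩
    · rintro ⟨x, hxi, rfl⟩
      exact ⟨Finset.orderEmbOfFin_mem _ _ _, (γ.orderEmbOfFin hn).le_iff_le.mpr hxi⟩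
  rw [finsetPos, himg, Finset.card_image_of_injective _ (γ.orderEmbOfFin hn).injective,
    Fin.card_Iic]

theorem orderEmbOfFin_congr {s t : Finset E} (hst : s = t) {n : ℕ} (hs : s.card = n)
    (ht : t.card = n) (x : Fin n) : s.orderEmbOfFin hs x = t.orderEmbOfFin ht x := by
  subst hst; rfl

theorem orderEmbOfFin_erase (γ : Finset E) {n : ℕ} (hn : γ.card = n + 1) (i : Fin (n + 1))
    (hm : (γ.erase (γ.orderEmbOfFin hn i)).card = n) (x : Fin n) :
    (γ.erase (γ.orderEmbOfFin hn i)).orderEmbOfFin hm x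
      = γ.orderEmbOfFin hn (i.succAbove x) := by
  classical
  have hmem : ∀ y : Fin n,
      γ.orderEmbOfFin hn (i.succAbove y) ∈ γ.erase (γ.orderEmbOfFin hn i) := by
    intro y
    refine Finset.mem_erase.mpr ⟨?_, Finset.orderEmbOfFin_mem _ _ _⟩
    intro h
    exact Fin.succAbove_ne i y ((γ.orderEmbOfFin hn).injective h)
  have hmono : StrictMono fun y : Fin n => γ.orderEmbOfFin hn (i.succAbove y) :=
    (γ.orderEmbOfFin hn).strictMono.comp (Fin.strictMono_succAbove i)
  exact (congrFun (Finset.orderEmbOfFin_unique hm hmem hmono) x).symm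

end Aux
section Core

variable {E : Type*} [LinearOrder E]

theorem gperm_succAbove (g : E ≃ E) (γ : Finset E) {n : ℕ} (hn : γ.card = n + 1)
    (i : Fin (n + 1)) (hm : (γ.erase (γ.orderEmbOfFin hn i)).card = n) (x : Fin n) :
    gperm g γ hn (i.succAbove x)
      = (gperm g γ hn i).succAbove (gperm g (γ.erase (γ.orderEmbOfFin hn i)) hm x) := by
  classical
  have hm' : (γ.image g).card = n + 1 :=
    (Finset.card_image_of_injective γ g.injective).trans hn
  have hem' : ((γ.erase (γ.orderEmbOfFin hn i)).image g).card = n :=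
    (Finset.card_image_of_injective _ g.injective).trans hm
  have himg : (γ.erase (γ.orderEmbOfFin hn i)).image g
      = (γ.image g).erase (g (γ.orderEmbOfFin hn i)) :=
    Finset.image_erase g.injective γ _
  have hem'' : ((γ.image g).erase ((γ.image g).orderEmbOfFin hm' (gperm g γ hn i))).card
      = n := by
    rw [gperm_apply g γ hn hm' i, ← himg]; exact hem'
  apply ((γ.image g).orderEmbOfFin hm').injective
  rw [gperm_apply g γ hn hm' (i.succAbove x),
    ← orderEmbOfFin_erase γ hn i hm x,
    ← gperm_apply g (γ.erase (γ.orderEmbOfFin hn i)) hm hem' x,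
    ← orderEmbOfFin_erase (γ.image g) hm' (gperm g γ hn i) hem'']
  exact orderEmbOfFin_congr (by rw [himg, gperm_apply g γ hn hm' i]) hem' _ _

theorem sign_gperm_erase (g : E ≃ E) (γ : Finset E) {n : ℕ} (hn : γ.card = n + 1)
    (i : Fin (n + 1)) (hm : (γ.erase (γ.orderEmbOfFin hn i)).card = n) :
    (Equiv.Perm.sign (gperm g (γ.erase (γ.orderEmbOfFin hn i)) hm) : ℤ)
      = (-1) ^ ((i : ℕ) + ((gperm g γ hn i : Fin (n + 1)) : ℕ))
          * Equiv.Perm.sign (gperm g γ hn) := by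
  classical
  set π := gperm g γ hn with hπ
  set ρ := gperm g (γ.erase (γ.orderEmbOfFin hn i)) hm with hρ
  set j := π i with hj
  have key : Fin.cycleRange j * π * (Fin.cycleRange i)⁻¹
      = Equiv.Perm.decomposeFin.symm (0, ρ) := by
    apply Equiv.ext
    intro y
    induction y using Fin.cases with
    | zero =>
      have h0 : (Fin.cycleRange i)⁻¹ (0 : Fin (n + 1)) = i := Fin.cycleRange_symm_zero i
      rw [Equiv.Perm.mul_apply, Equiv.Perm.mul_apply, h0, ← hj, Fin.cycleRange_self,
        Equiv.Perm.decomposeFin_symm_apply_zero]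
    | succ x =>
      have h0 : (Fin.cycleRange i)⁻¹ x.succ = i.succAbove x := Fin.cycleRange_symm_succ i x
      rw [Equiv.Perm.mul_apply, Equiv.Perm.mul_apply, h0,
        gperm_succAbove g γ hn i hm x, ← hρ, ← hj, Fin.cycleRange_succAbove,
        Equiv.Perm.decomposeFin_symm_apply_succ, Equiv.swap_self, Equiv.refl_apply]
  have hs := congrArg Equiv.Perm.sign key
  rw [map_mul, map_mul, map_inv, Fin.sign_cycleRange, Fin.sign_cycleRange,
    Equiv.Perm.decomposeFin.symm_sign, if_pos rfl, one_mul, Int.units_inv_eq_self] at hs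
  rw [← hs]
  push_cast
  rw [pow_add]
  ring

end Core
section Final

variable {E : Type*} [LinearOrder E]

theorem key_sign (g : E ≃ E) (γ : Finset E) {e : E} (he : e ∈ γ) :
    (-1 : ℤ) ^ finsetPos γ e * finsetSign g (γ.erase e)
      = finsetSign g γ * (-1) ^ finsetPos (γ.image g) (g e) := by
  classical
  obtain ⟨n, hn⟩ : ∃ n, γ.card = n + 1 :=
    ⟨γ.card - 1, (Nat.succ_pred_eq_of_pos (Finset.card_pos.mpr ⟨e, he⟩)).symm⟩
  set i : Fin (n + 1) := (γ.orderIsoOfFin hn).symm ⟨e, he⟩ with hi_def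
  have hi : γ.orderEmbOfFin hn i = e := by
    rw [← Finset.coe_orderIsoOfFin_apply, hi_def]; simp
  have hm : (γ.erase e).card = n := by
    rw [Finset.card_erase_of_mem he, hn]; rfl
  have hm'' : (γ.erase (γ.orderEmbOfFin hn i)).card = n := by rw [hi]; exact hm
  have hm' : (γ.image g).card = n + 1 :=
    (Finset.card_image_of_injective γ g.injective).trans hn
  set j := gperm g γ hn i with hj
  have hge : (γ.image g).orderEmbOfFin hm' j = g e := by
    rw [hj, gperm_apply g γ hn hm' i, hi]
  have hpos1 : finsetPos γ e = (i : ℕ) + 1 := by rw [← hi]; exact finsetPos_eq γ hn i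
  have hpos2 : finsetPos (γ.image g) (g e) = (j : ℕ) + 1 := by
    rw [← hge]; exact finsetPos_eq (γ.image g) hm' j
  have hsign1 : finsetSign g γ = (Equiv.Perm.sign (gperm g γ hn) : ℤ) := finsetSign_eq g γ hn
  have hsign2 : finsetSign g (γ.erase e)
      = ((-1 : ℤ) ^ ((i : ℕ) + (j : ℕ))) * Equiv.Perm.sign (gperm g γ hn) := by
    rw [← hi] at hm ⊢
    rw [finsetSign_eq g (γ.erase (γ.orderEmbOfFin hn i)) hm]
    exact sign_gperm_erase g γ hn i hm
  have hpow : (-1 : ℤ) ^ ((i : ℕ) + 1) * (-1) ^ ((i : ℕ) + (j : ℕ)) = (-1) ^ ((j : ℕ) + 1) := by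
    rw [← pow_add]
    have harith : (i : ℕ) + 1 + ((i : ℕ) + (j : ℕ)) = 2 * (i : ℕ) + ((j : ℕ) + 1) := by ring
    rw [harith, pow_add, pow_mul]
    norm_num
  rw [hpos1, hpos2, hsign1, hsign2, ← mul_assoc, hpow]
  ring

end Final
/-- **Proposition 6.6** (equivariance of the total-cofibre differential).  Given an
`E`-cubical diagram of `k`-modules `N` with structure maps `∂_{γ,e}`, a bijection `g` of `E`
and additive maps `σ_γ : N γ → N (g·γ)` which are natural with respect to the `∂`'s, the
signed action `g·(y_γ·x) = sgn(g:γ)·y_{g·γ}·σ_γ(x)` commutes with the cubical part of the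
total-cofibre differential. -/
theorem stmt3 {E : Type*} [LinearOrder E] (k : Type*) [CommRing k] (g : E ≃ E)
    (N : Finset E → Type*) [∀ γ, AddCommGroup (N γ)] [∀ γ, Module k (N γ)]
    (der : ∀ (γ : Finset E) (e : E), e ∈ γ → (N γ →ₗ[k] N (γ.erase e)))
    (hcomm : ∀ (γ : Finset E) (e e' : E) (he : e ∈ γ) (he' : e' ∈ γ) (hne : e' ≠ e),
      (DirectSum.lof k (Finset E) N ((γ.erase e).erase e')).comp
        ((der (γ.erase e) e' (Finset.mem_erase.mpr ⟨hne, he'⟩)).comp (der γ e he)) =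
      (DirectSum.lof k (Finset E) N ((γ.erase e').erase e)).comp
        ((der (γ.erase e') e (Finset.mem_erase.mpr ⟨Ne.symm hne, he⟩)).comp (der γ e' he')))
    (σ : ∀ γ : Finset E, N γ →+ N (γ.image g))
    (hnat : ∀ (γ : Finset E) (e : E) (he : e ∈ γ) (x : N γ),
      DirectSum.of (fun δ : Finset E => N δ) ((γ.erase e).image g)
          (σ (γ.erase e) (der γ e he x)) =
        DirectSum.of (fun δ : Finset E => N δ) ((γ.image g).erase (g e))
          (der (γ.image g) (g e) (Finset.mem_image_of_mem g he) (σ γ x))) :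
    ∀ (γ : Finset E) (x : N γ),
      (∑ e ∈ γ.attach,
        (((-1 : ℤ) ^ finsetPos γ e.1 * finsetSign g (γ.erase e.1)) •
          DirectSum.of (fun δ : Finset E => N δ) ((γ.erase e.1).image g)
            (σ (γ.erase e.1) (der γ e.1 e.2 x)))) =
      finsetSign g γ •
        ∑ e ∈ γ.attach,
          (((-1 : ℤ) ^ finsetPos (γ.image g) (g e.1)) •
            DirectSum.of (fun δ : Finset E => N δ) ((γ.image g).erase (g e.1))
              (der (γ.image g) (g e.1) (Finset.mem_image_of_mem g e.2) (σ γ x))) := by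
  intro γ x
  rw [Finset.smul_sum]
  refine Finset.sum_congr rfl fun e _ => ?_
  rw [hnat γ e.1 e.2 x, smul_smul, key_sign g γ e.2]
end

section
/- Let E be a finite set and let P be a family of subsets of E which contains the empty set and is closed under taking subsets (if γ ∈ P and δ ⊆ γ then δ ∈ P). Suppose given signs R(γ,e) ∈ {−1,+1} for every γ ∈ P and e ∈ γ, satisfying for all γ ∈ P and all distinct e₁, e₂ ∈ γ: R(γ,e₁)·R(γ∖{e₁},e₂) = R(γ,e₂)·R(γ∖{e₂},e₁). Then there exists a map λ : P → {−1,+1} with λ(∅) = 1 such that for every nonempty γ ∈ P and every e ∈ γ: λ(γ) = R(γ,e)·λ(γ∖{e}). -/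
noncomputable def auxLam {E : Type*} [DecidableEq E] (R : Finset E → E → ℤ) :
    ℕ → Finset E → ℤ
  | 0, _ => 1
  | n+1, γ => if h : γ.Nonempty then R γ h.choose * auxLam R n (γ.erase h.choose) else 1

theorem auxLam_spec {E : Type*} [DecidableEq E]
    (P : Set (Finset E))
    (hPdown : ∀ γ ∈ P, ∀ δ : Finset E, δ ⊆ γ → δ ∈ P)
    (R : Finset E → E → ℤ)
    (hcomp : ∀ γ ∈ P, ∀ e₁ ∈ γ, ∀ e₂ ∈ γ, e₁ ≠ e₂ →
      R γ e₁ * R (γ.erase e₁) e₂ = R γ e₂ * R (γ.erase e₂) e₁) :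
    ∀ n : ℕ, ∀ γ ∈ P, γ.card = n + 1 → ∀ e ∈ γ,
      auxLam R (n+1) γ = R γ e * auxLam R n (γ.erase e) := by
  intro n
  induction n using Nat.strong_induction_on with
  | _ n ih =>
    intro γ hγ hcard e he
    have hne : γ.Nonempty := ⟨e, he⟩
    have he0 : hne.choose ∈ γ := hne.choose_spec
    rw [auxLam]
    rw [dif_pos hne]
    set e₀ := hne.choose with he₀def
    by_cases heq : e = e₀
    · rw [heq]
    · -- n ≥ 1 since γ has at least two elements
      have h2 : 2 ≤ γ.card := Finset.one_lt_card.mpr ⟨e, he, e₀, he0, heq⟩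
      obtain ⟨m, rfl⟩ : ∃ m, n = m + 1 := ⟨n - 1, by omega⟩
      have hγ0 : γ.erase e₀ ∈ P := hPdown γ hγ _ (Finset.erase_subset _ _)
      have hγe : γ.erase e ∈ P := hPdown γ hγ _ (Finset.erase_subset _ _)
      have hc0 : (γ.erase e₀).card = m + 1 := by
        rw [Finset.card_erase_of_mem he0]; omega
      have hce : (γ.erase e).card = m + 1 := by
        rw [Finset.card_erase_of_mem he]; omega
      have hmem1 : e ∈ γ.erase e₀ := Finset.mem_erase.mpr ⟨heq, he⟩
      have hmem2 : e₀ ∈ γ.erase e := Finset.mem_erase.mpr ⟨fun h => heq h.symm, he0⟩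
      rw [ih m (by omega) _ hγ0 hc0 e hmem1,
          ih m (by omega) _ hγe hce e₀ hmem2]
      rw [Finset.erase_right_comm]
      rw [← mul_assoc, ← mul_assoc, hcomp γ hγ e₀ he0 e he (fun h => heq h.symm)]

/-- **Lemma 9.5 (abstract form).**  Let `E` be a finite set and `P` a family of subsets of `E`
containing `∅` and closed under taking subsets.  Given signs `R(γ,e) ∈ {−1,+1}` for `γ ∈ P`,
`e ∈ γ`, satisfying `R(γ,e₁)·R(γ∖{e₁},e₂) = R(γ,e₂)·R(γ∖{e₂},e₁)` for distinct `e₁,e₂ ∈ γ`,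
there is a map `λ : P → {−1,+1}` with `λ(∅) = 1` and `λ(γ) = R(γ,e)·λ(γ∖{e})` for all
`γ ∈ P` and `e ∈ γ`. -/
theorem stmt8 {E : Type*} [Fintype E] [DecidableEq E]
    (P : Set (Finset E)) (hP0 : (∅ : Finset E) ∈ P)
    (hPdown : ∀ γ ∈ P, ∀ δ : Finset E, δ ⊆ γ → δ ∈ P)
    (R : Finset E → E → ℤ)
    (hR : ∀ γ ∈ P, ∀ e ∈ γ, R γ e = 1 ∨ R γ e = -1)
    (hcomp : ∀ γ ∈ P, ∀ e₁ ∈ γ, ∀ e₂ ∈ γ, e₁ ≠ e₂ →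
      R γ e₁ * R (γ.erase e₁) e₂ = R γ e₂ * R (γ.erase e₂) e₁) :
    ∃ lam : Finset E → ℤ, lam ∅ = 1 ∧ (∀ γ ∈ P, lam γ = 1 ∨ lam γ = -1) ∧
      ∀ γ ∈ P, ∀ e ∈ γ, lam γ = R γ e * lam (γ.erase e) := by
  refine ⟨fun γ => auxLam R γ.card γ, rfl, ?_, ?_⟩
  · -- sign claim
    have key : ∀ n : ℕ, ∀ γ ∈ P, γ.card = n → auxLam R n γ = 1 ∨ auxLam R n γ = -1 := by
      intro n
      induction n with
      | zero => intro γ _ _; left; rfl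
      | succ n ihn =>
        intro γ hγ hcard
        have hne : γ.Nonempty := Finset.card_pos.mp (by omega)
        rw [auxLam, dif_pos hne]
        have he0 := hne.choose_spec
        have h1 := hR γ hγ _ he0
        have h2 := ihn (γ.erase hne.choose)
          (hPdown γ hγ _ (Finset.erase_subset _ _))
          (by rw [Finset.card_erase_of_mem he0]; omega)
        rcases h1 with h1 | h1 <;> rcases h2 with h2 | h2 <;>
          simp [h1, h2]
    intro γ hγ; exact key γ.card γ hγ rfl
  · intro γ hγ e he
    have hne : γ.Nonempty := ⟨e, he⟩
    obtain ⟨n, hn⟩ : ∃ n, γ.card = n + 1 :=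
      ⟨γ.card - 1, by have := Finset.card_pos.mpr hne; omega⟩
    show auxLam R γ.card γ = R γ e * auxLam R (γ.erase e).card (γ.erase e)
    rw [hn, Finset.card_erase_of_mem he, hn]
    simpa using auxLam_spec P hPdown R hcomp n γ hγ hn e he
end
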